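/- Let R be a Γ-graded von Neumann regular ring and let B be a graded right ideal of R generated by finitely many homogeneous elements. Then there exists a homogeneous idempotent e ∈ R_0 with B = eR; in particular, B is a direct summand of R as a right R-module. -/
import Mathlib


/- Setting: `Γ = ι` an additive abelian group, `R` a `ι`-graded ring with identity,
with homogeneous components the additive subgroups `𝒜 γ`. -/

variable {ι R : Type*}

section Defs
variable [DecidableEq ι] [AddCommGroup ι] [Ring R] (𝒜 : ι → AddSubgroup R) [GradedRing 𝒜]

/-- An element of `R` is homogeneous if it lies in some component `𝒜 γ`. -/
def IsHomog (a : R) : Prop := ∃ γ : ι, a ∈ 𝒜 γ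

/-- `R` is graded von Neumann regular: every homogeneous element has an inner inverse. -/
def GradedVNRegular : Prop := ∀ a : R, IsHomog 𝒜 a → ∃ b : R, a * b * a = a

/-- A subset of `R` is a right ideal. -/
def IsRightIdealSet (I : Set R) : Prop :=
  (0 : R) ∈ I ∧ (∀ x ∈ I, ∀ y ∈ I, x + y ∈ I) ∧ ∀ x ∈ I, ∀ r : R, x * r ∈ I

/-- A graded right ideal: a right ideal containing all homogeneous components of
its elements. -/
def IsGradedRightIdeal (I : Set R) : Prop :=
  IsRightIdealSet I ∧ ∀ x ∈ I, ∀ γ : ι, ((DirectSum.decompose 𝒜 x γ : 𝒜 γ) : R) ∈ I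

/-- `A` is graded essential in `B` (as graded right ideals): `A ⊆ B` and every nonzero
graded right ideal contained in `B` meets `A` nontrivially. -/
def GradedEssentialIn (A B : Set R) : Prop :=
  A ⊆ B ∧ ∀ J : Set R, IsGradedRightIdeal 𝒜 J → J ⊆ B → (∃ x ∈ J, x ≠ 0) →
    ∃ x, x ∈ A ∩ J ∧ x ≠ 0

/-- Graded Baer criterion: `R` is graded right self-injective. A homomorphism from a
graded right ideal `I` to `R` is encoded as a function `f : R → R` which is additive on
`I`, right `R`-linear on `I`, and of degree `γ` on `I`. -/
def GradedSelfInjective : Prop :=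
  ∀ I : Set R, IsGradedRightIdeal 𝒜 I → ∀ γ : ι, ∀ f : R → R,
    (∀ x ∈ I, ∀ y ∈ I, f (x + y) = f x + f y) →
    (∀ x ∈ I, ∀ r : R, f (x * r) = f x * r) →
    (∀ δ : ι, ∀ x ∈ I, x ∈ 𝒜 δ → f x ∈ 𝒜 (γ + δ)) →
    ∃ c ∈ 𝒜 γ, ∀ x ∈ I, f x = c * x

end Defs

section Aux
variable [DecidableEq ι] [AddCommGroup ι] [Ring R] (𝒜 : ι → AddSubgroup R) [GradedRing 𝒜]

lemma single_idem (hreg : GradedVNRegular 𝒜) (a : R) (ha : IsHomog 𝒜 a) :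
    ∃ f : R, f ∈ 𝒜 (0 : ι) ∧ f * f = f ∧ f * a = a ∧ ∃ r : R, f = a * r := by
  obtain ⟨γ, haγ⟩ := ha
  obtain ⟨b, hb⟩ := hreg a ⟨γ, haγ⟩
  set b' : R := ((DirectSum.decompose 𝒜 b (-γ) : 𝒜 (-γ)) : R) with hb'
  have hb'mem : b' ∈ 𝒜 (-γ) := SetLike.coe_mem _
  have hfa : a * b' * a = a := by
    have h1 : ((DirectSum.decompose 𝒜 (a * b * a) ((γ + -γ) + γ) : 𝒜 _) : R)
        = a * b' * a := by
      rw [DirectSum.coe_decompose_mul_add_of_right_mem 𝒜 (⟨a, haγ⟩ : 𝒜 γ).2,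
        DirectSum.coe_decompose_mul_add_of_left_mem 𝒜 haγ]
    have h2 : ((γ + -γ) + γ) = γ := by abel
    rw [h2, hb, DirectSum.decompose_of_mem_same 𝒜 haγ] at h1
    exact h1.symm
  refine ⟨a * b', ?_, ?_, hfa, b', rfl⟩
  · have := SetLike.mul_mem_graded haγ hb'mem
    simpa using this
  · calc a * b' * (a * b') = (a * b' * a) * b' := by noncomm_ring
    _ = a * b' := by rw [hfa]

lemma multi_idem (hreg : GradedVNRegular 𝒜) (s : Finset R) (hs : ∀ a ∈ s, IsHomog 𝒜 a) :
    ∃ e : R, e ∈ 𝒜 (0 : ι) ∧ e * e = e ∧ (∀ a ∈ s, e * a = a) ∧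
      (∀ I : Set R, IsRightIdealSet I → ↑s ⊆ I → e ∈ I) := by
  classical
  induction s using Finset.induction_on with
  | empty =>
    exact ⟨0, zero_mem _, by noncomm_ring, by simp, fun I hI _ => hI.1⟩
  | @insert a s' has' ih =>
    obtain ⟨e, he0, hee, hegen, heI⟩ := ih (fun x hx => hs x (Finset.mem_insert_of_mem hx))
    obtain ⟨f, hf0, hff, hfa, r, hfr⟩ := single_idem 𝒜 hreg a (hs a (Finset.mem_insert_self a s'))
    set c : R := f - e * f with hc
    have hc0 : c ∈ 𝒜 (0 : ι) := by
      have : e * f ∈ 𝒜 ((0 : ι) + 0) := SetLike.mul_mem_graded he0 hf0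
      simpa [hc] using sub_mem hf0 (by simpa using this)
    have hec : e * c = 0 := by
      simp only [hc, mul_sub, ← mul_assoc, hee, sub_self]
    obtain ⟨e', he'0, he'e', he'c, r', hr'⟩ := single_idem 𝒜 hreg c ⟨0, hc0⟩
    have hee' : e * e' = 0 := by
      rw [hr', ← mul_assoc, hec, zero_mul]
    set g : R := e + e' - e' * e with hg
    have hge : g * e = e := by
      have h : g * e = e * e + e' * e - e' * (e * e) := by rw [hg]; noncomm_ring
      rw [h, hee]; noncomm_ring
    have hge' : g * e' = e' := by
      have h : g * e' = e * e' + e' * e' - e' * (e * e') := by rw [hg]; noncomm_ring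
      rw [h, hee', he'e', mul_zero]; noncomm_ring
    have hgf : g * f = f := by
      have h1 : g * (e * f) = e * f := by rw [← mul_assoc, hge]
      have h2 : g * c = c := by rw [← he'c, ← mul_assoc, hge', he'c]
      have : g * f = g * (c + e * f) := by rw [hc]; noncomm_ring
      rw [this, mul_add, h1, h2, hc]; noncomm_ring
    refine ⟨g, ?_, ?_, ?_, ?_⟩
    · have h1 : e' * e ∈ 𝒜 ((0 : ι) + 0) := SetLike.mul_mem_graded he'0 he0
      exact sub_mem (add_mem he0 he'0) (by simpa using h1)
    · have : g * g = g * e + g * e' - g * (e' * e) := by rw [hg]; noncomm_ring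
      rw [this, hge, hge', ← mul_assoc, hge', hg]
    · intro x hx
      rcases Finset.mem_insert.mp hx with rfl | hx'
      · rw [← hfa, ← mul_assoc, hgf]
      · rw [← hegen x hx', ← mul_assoc, hge]
    · intro I hI hsub
      obtain ⟨h0, hadd, hmul⟩ := hI
      have haI : a ∈ I := hsub (by simp)
      have hs'I : (↑s' : Set R) ⊆ I := fun x hx => hsub (by simp [hx])
      have heIm : e ∈ I := heI I ⟨h0, hadd, hmul⟩ hs'I
      have hfI : f ∈ I := hfr ▸ hmul a haI r
      have he'I : e' ∈ I := by
        have h1 : f * r' ∈ I := hmul f hfI r'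
        have h2 : e * ((f * r') * (-1)) ∈ I := hmul e heIm _
        have : e' = f * r' + e * ((f * r') * (-1)) := by
          rw [hr', hc]; noncomm_ring
        rw [this]; exact hadd _ h1 _ h2
      have h3 : e' * (-e) ∈ I := hmul e' he'I _
      have : g = e + (e' + e' * (-e)) := by rw [hg]; noncomm_ring
      rw [this]; exact hadd _ heIm _ (hadd _ he'I _ h3)

end Aux

/-- In a graded von Neumann regular ring, every graded right ideal `B`
generated by finitely many homogeneous elements is of the form `eR` for a homogeneous
idempotent `e ∈ R₀`; in particular `B` is a direct summand of `R`. (`eR` is encoded as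
`{x | e * x = x}`, which equals `eR` since `e` is idempotent.) -/


theorem finitely_generated_graded_right_ideal_is_summand
    [DecidableEq ι] [AddCommGroup ι] [Ring R] (𝒜 : ι → AddSubgroup R) [GradedRing 𝒜]
    (hreg : GradedVNRegular 𝒜) (B : Set R) (hB : IsGradedRightIdeal 𝒜 B)
    (hgen : ∃ s : Finset R, (∀ a ∈ s, IsHomog 𝒜 a) ∧ ↑s ⊆ B ∧
      ∀ I : Set R, IsRightIdealSet I → ↑s ⊆ I → B ⊆ I) :
    ∃ e : R, e ∈ 𝒜 (0 : ι) ∧ e * e = e ∧ B = {x : R | e * x = x} := by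
  obtain ⟨s, hshom, hsB, hmin⟩ := hgen
  obtain ⟨e, he0, hee, hegen, heI⟩ := multi_idem 𝒜 hreg s hshom
  refine ⟨e, he0, hee, Set.Subset.antisymm ?_ ?_⟩
  · apply hmin
    · refine ⟨by simp, fun x hx y hy => ?_, fun x hx r => ?_⟩
      · simp only [Set.mem_setOf_eq] at *
        rw [mul_add, hx, hy]
      · simp only [Set.mem_setOf_eq] at *
        rw [← mul_assoc, hx]
    · intro a ha
      exact hegen a ha
  · intro x hx
    simp only [Set.mem_setOf_eq] at hx
    have heB : e ∈ B := heI B hB.1 hsB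
    rw [← hx]
    exact hB.1.2.2 e heB x
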